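/- arXiv:2604.11673 — 2 statements merged into one kernel-verified Lean document; each statement's English description precedes it below -/
import Mathlib

section
/- Let n ≥ 3 and let a, b ∈ ℝ^n with Σ_{i=1}^n a_i = Σ_{j=1}^n b_j, and set λ_{ij} = exp(a_i + b_j) for i ≠ j. For α, β ∈ ℝ^n with Σ_{i=1}^n α_i = Σ_{j=1}^n β_j, define the population risk R(α, β) = Σ_{i≠j} [exp(α_i + β_j) − λ_{ij}·(α_i + β_j)]. Then R(α, β) ≥ R(a, b) for all such (α, β), with equality if and only if α = a and β = b. -/
open Real Finset

lemma pr_key (t x : ℝ) : Real.exp t - Real.exp t * t ≤ Real.exp x - Real.exp t * x := by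
  have h := Real.add_one_le_exp (x - t)
  have h2 : Real.exp t * (x - t + 1) ≤ Real.exp t * Real.exp (x - t) :=
    mul_le_mul_of_nonneg_left h (Real.exp_pos t).le
  rw [← Real.exp_add, add_sub_cancel] at h2
  nlinarith [Real.exp_pos t]

lemma pr_key_eq (t x : ℝ) (h : Real.exp t - Real.exp t * t = Real.exp x - Real.exp t * x) :
    x = t := by
  by_contra hne
  have h1 := Real.add_one_lt_exp (sub_ne_zero.mpr hne)
  have h2 : Real.exp t * (x - t + 1) < Real.exp t * Real.exp (x - t) :=
    mul_lt_mul_of_pos_left h1 (Real.exp_pos t)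
  rw [← Real.exp_add, add_sub_cancel] at h2
  nlinarith [Real.exp_pos t]

/-- The true parameters `(a, b)` are the unique minimizer, among parameters
satisfying the identifiability constraint `∑ α = ∑ β`, of the population risk
`R(α, β) = ∑_{i≠j} [exp(α_i + β_j) − λ_{ij}(α_i + β_j)]` where
`λ_{ij} = exp(a_i + b_j)`. -/
theorem population_risk_unique_minimizer (n : ℕ) (hn : 3 ≤ n)
    (a b : Fin n → ℝ) (hab : ∑ i, a i = ∑ j, b j)
    (lam : Fin n → Fin n → ℝ)
    (hlam : ∀ i j : Fin n, i ≠ j → lam i j = Real.exp (a i + b j))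
    (R : (Fin n → ℝ) → (Fin n → ℝ) → ℝ)
    (hR : ∀ α β : Fin n → ℝ,
      R α β = ∑ i, ∑ j ∈ Finset.univ.filter (fun j => j ≠ i),
        (Real.exp (α i + β j) - lam i j * (α i + β j))) :
    ∀ α β : Fin n → ℝ, (∑ i, α i = ∑ j, β j) →
      R a b ≤ R α β ∧ (R α β = R a b ↔ α = a ∧ β = b) := by
  intro α β hαβ
  have hterm : ∀ i j : Fin n, j ≠ i →
      Real.exp (a i + b j) - lam i j * (a i + b j) ≤
        Real.exp (α i + β j) - lam i j * (α i + β j) := by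
    intro i j hj
    rw [hlam i j (Ne.symm hj)]
    exact pr_key _ _
  have hinner : ∀ i : Fin n,
      ∑ j ∈ Finset.univ.filter (fun j => j ≠ i),
        (Real.exp (a i + b j) - lam i j * (a i + b j)) ≤
      ∑ j ∈ Finset.univ.filter (fun j => j ≠ i),
        (Real.exp (α i + β j) - lam i j * (α i + β j)) := by
    intro i
    refine Finset.sum_le_sum fun j hj => hterm i j (Finset.mem_filter.mp hj).2
  have hle : R a b ≤ R α β := by
    rw [hR, hR]
    exact Finset.sum_le_sum fun i _ => hinner i
  refine ⟨hle, ?_, ?_⟩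
  · -- equality implies α = a, β = b
    intro heq
    rw [hR, hR] at heq
    have houter := (Finset.sum_eq_sum_iff_of_le (fun i _ => hinner i)).mp heq.symm
    have hterm_eq : ∀ i j : Fin n, j ≠ i → α i + β j = a i + b j := by
      intro i j hj
      have hi := houter i (Finset.mem_univ i)
      have := (Finset.sum_eq_sum_iff_of_le
        (fun j hj => hterm i j (Finset.mem_filter.mp hj).2)).mp hi j
        (Finset.mem_filter.mpr ⟨Finset.mem_univ j, hj⟩)
      rw [hlam i j (Ne.symm hj)] at this
      exact pr_key_eq _ _ this
    have hexists : ∀ i i' : Fin n, ∃ j : Fin n, j ≠ i ∧ j ≠ i' := by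
      intro i i'
      by_contra h
      push_neg at h
      have hsub : (Finset.univ : Finset (Fin n)) ⊆ {i, i'} := by
        intro j _
        rcases eq_or_ne j i with hji | hji
        · simp [hji]
        · simp [h j hji]
      have hc := Finset.card_le_card hsub
      have h2 : ({i, i'} : Finset (Fin n)).card ≤ 2 :=
        (Finset.card_insert_le _ _).trans (by simp)
      simp only [Finset.card_univ, Fintype.card_fin] at hc
      omega
    have hu : ∀ i i' : Fin n, α i - a i = α i' - a i' := by
      intro i i'
      obtain ⟨j, hji, hji'⟩ := hexists i i'
      have h1 := hterm_eq i j hji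
      have h2 := hterm_eq i' j hji'
      linarith
    have hn0 : 0 < n := by omega
    set i0 : Fin n := ⟨0, hn0⟩ with hi0
    set c : ℝ := α i0 - a i0 with hc
    have huc : ∀ i, α i - a i = c := fun i => hu i i0
    have hv : ∀ j, β j - b j = -c := by
      intro j
      obtain ⟨i, hij, _⟩ := hexists j j
      have h1 := hterm_eq i j hij.symm
      have h2 := huc i
      linarith
    have hsum1 : ∑ i, (α i - a i) = n * c := by
      rw [Finset.sum_congr rfl fun i _ => huc i]
      simp [mul_comm]
    have hsum2 : ∑ j, (β j - b j) = n * (-c) := by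
      rw [Finset.sum_congr rfl fun j _ => hv j]
      simp [mul_comm]
    have hsum3 : ∑ i, (α i - a i) = ∑ j, (β j - b j) := by
      rw [Finset.sum_sub_distrib, Finset.sum_sub_distrib, hαβ, hab]
    have hc0 : c = 0 := by
      rw [hsum1, hsum2] at hsum3
      have : (n : ℝ) > 0 := by exact_mod_cast hn0
      nlinarith
    constructor
    · funext i; have := huc i; rw [hc0] at this; linarith
    · funext j; have := hv j; rw [hc0] at this; linarith
  · rintro ⟨rfl, rfl⟩; rfl
end

section
/- Let (X, d) be a metric space equipped with a Borel measure μ, let n ≥ 1, and let V_1, …, V_n be pairwise disjoint Borel sets with X = V_1 ∪ ⋯ ∪ V_n. Suppose there exist points x_1, …, x_n ∈ X, and constants C > 0 and h ≥ 0, such that μ(V_i) ≤ C/n for each i and d(y, x_i) ≤ h for every y ∈ V_i. Let g : X → ℝ be Lipschitz with constant b ≥ 0. Then ∫_X g(x)² dμ(x) ≤ (2C/n)·Σ_{i=1}^n g(x_i)² + 2C·b²·h². -/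
open MeasureTheory Real Finset

/-- Transfer from empirical to integrated L2 norm: if `X` is partitioned into
cells `V_i` of measure at most `C/n`, each within distance `h` of its center
`x_i`, and `g` is `b`-Lipschitz, then
`∫ g² dμ ≤ (2C/n) ∑_i g(x_i)² + 2C b² h²`. -/
theorem empirical_to_integrated_L2
    {X : Type*} [MetricSpace X] [MeasurableSpace X] [BorelSpace X]
    (μ : Measure X) (n : ℕ) (hn : 1 ≤ n)
    (V : Fin n → Set X) (hVmeas : ∀ i, MeasurableSet (V i))
    (hVdisj : Pairwise (Function.onFun Disjoint V))
    (hVcover : (⋃ i, V i) = Set.univ)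
    (x : Fin n → X) (C h : ℝ) (hC : 0 < C) (hh : 0 ≤ h)
    (hVmu : ∀ i, μ (V i) ≤ ENNReal.ofReal (C / n))
    (hVfill : ∀ i, ∀ y ∈ V i, dist y (x i) ≤ h)
    (g : X → ℝ) (b : ℝ) (hb : 0 ≤ b)
    (hg : ∀ y z : X, |g y - g z| ≤ b * dist y z) :
    ∫⁻ y, ENNReal.ofReal ((g y) ^ 2) ∂μ ≤
      ENNReal.ofReal ((2 * C / n) * ∑ i, (g (x i)) ^ 2 + 2 * C * b ^ 2 * h ^ 2) := by
  have hn0 : (0:ℝ) < n := by exact_mod_cast hn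
  set K : Fin n → ℝ := fun i => 2 * (g (x i)) ^ 2 + 2 * b ^ 2 * h ^ 2 with hK
  have hK0 : ∀ i, 0 ≤ K i := fun i => by positivity
  have step1 : ∫⁻ y, ENNReal.ofReal ((g y) ^ 2) ∂μ ≤
      ∑ i, ∫⁻ y in V i, ENNReal.ofReal ((g y) ^ 2) ∂μ := by
    have := MeasureTheory.lintegral_iUnion_le (μ := μ)
      (s := V) (f := fun y => ENNReal.ofReal ((g y) ^ 2))
    rw [hVcover, Measure.restrict_univ] at this
    simpa [tsum_fintype] using this
  have step2 : ∀ i, ∫⁻ y in V i, ENNReal.ofReal ((g y) ^ 2) ∂μ ≤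
      ENNReal.ofReal (K i * (C / n)) := by
    intro i
    have hpt : ∀ y ∈ V i, ENNReal.ofReal ((g y) ^ 2) ≤ ENNReal.ofReal (K i) := by
      intro y hy
      apply ENNReal.ofReal_le_ofReal
      have h1 : |g y - g (x i)| ≤ b * h := by
        calc |g y - g (x i)| ≤ b * dist y (x i) := hg y (x i)
        _ ≤ b * h := by
          exact mul_le_mul_of_nonneg_left (hVfill i y hy) hb
      have h2 : (g y - g (x i))^2 ≤ (b*h)^2 := by
        have := sq_abs (g y - g (x i))
        nlinarith [abs_nonneg (g y - g (x i))]
      show g y ^ 2 ≤ 2 * (g (x i)) ^ 2 + 2 * b ^ 2 * h ^ 2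
      nlinarith [h2, sq_nonneg (g y - 2 * g (x i))]
    calc ∫⁻ y in V i, ENNReal.ofReal ((g y) ^ 2) ∂μ
        ≤ ∫⁻ _ in V i, ENNReal.ofReal (K i) ∂μ :=
          setLIntegral_mono' (hVmeas i) hpt
      _ = ENNReal.ofReal (K i) * μ (V i) := by simp [lintegral_const]
      _ ≤ ENNReal.ofReal (K i) * ENNReal.ofReal (C / n) :=
          mul_le_mul_right (hVmu i) _
      _ = ENNReal.ofReal (K i * (C / n)) := by
          rw [ENNReal.ofReal_mul (hK0 i)]
  calc ∫⁻ y, ENNReal.ofReal ((g y) ^ 2) ∂μ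
      ≤ ∑ i, ENNReal.ofReal (K i * (C / n)) :=
        step1.trans (Finset.sum_le_sum fun i _ => step2 i)
    _ = ENNReal.ofReal (∑ i, K i * (C / n)) := by
        rw [ENNReal.ofReal_sum_of_nonneg]
        intro i _
        have := hK0 i
        positivity
    _ ≤ ENNReal.ofReal ((2 * C / n) * ∑ i, (g (x i)) ^ 2 + 2 * C * b ^ 2 * h ^ 2) := by
        apply ENNReal.ofReal_le_ofReal
        have e1 : ∀ i : Fin n, K i * (C / n)
            = g (x i) ^ 2 * (2 * C / n) + 2 * b ^ 2 * h ^ 2 * (C / n) := by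
          intro i; simp only [hK]; ring
        rw [Finset.sum_congr rfl fun i _ => e1 i, Finset.sum_add_distrib,
          ← Finset.sum_mul, Finset.sum_const, card_univ, Fintype.card_fin, nsmul_eq_mul]
        have hne : (n : ℝ) ≠ 0 := ne_of_gt hn0
        field_simp
        ring_nf
        exact le_rfl
end
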